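/- arXiv:2304.01160 — 2 statements merged into one kernel-verified Lean document; each statement's English description precedes it below -/
import Mathlib

section
/- Let Ω ⊆ ℝⁿ be open, let L : ℝᵐ × (m×n real matrices) → ℝ be smooth (not depending on x), and let u : Ω → ℝᵐ be a smooth solution of the Euler–Lagrange equations: for each k, (∂L/∂y^k)(u, Du) = Σ_i ∂/∂x^i [ (∂L/∂q^k_i)(u, Du) ] on Ω. Then the energy-momentum tensor S with components S_{ij}(x) = Σ_k (∂L/∂q^k_i)(u(x), Du(x))·(∂u^k/∂x^j)(x) − δ_{ij}·L(u(x), Du(x)) is divergence free in its first index: Σ_i ∂S_{ij}/∂x^i = 0 on Ω for each 1 ≤ j ≤ n. -/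
/-- Partial derivative of a scalar function on `ℝⁿ` in the `i`-th coordinate direction. -/
noncomputable def pderiv' {n : ℕ} (i : Fin n) (f : (Fin n → ℝ) → ℝ) (x : Fin n → ℝ) : ℝ :=
  fderiv ℝ f x (Pi.single i 1)

section helpers
variable {m n : ℕ}

lemma vec_decomp (a : Fin m → ℝ) : a = ∑ k, a k • (Pi.single k 1 : Fin m → ℝ) := by
  funext k'
  simp [Finset.sum_apply, Pi.single_apply]

lemma mat_decomp (b : Fin m → Fin n → ℝ) :
    b = ∑ k, ∑ i, b k i • (Pi.single k (Pi.single i 1) : Fin m → Fin n → ℝ) := by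
  funext k' i'
  simp [Finset.sum_apply, Pi.single_apply, apply_ite (fun f : Fin n → ℝ => f i')]

lemma clm_comp_fderiv_apply {E F G : Type*} [NormedAddCommGroup E] [NormedSpace ℝ E]
    [NormedAddCommGroup F] [NormedSpace ℝ F] [NormedAddCommGroup G] [NormedSpace ℝ G]
    (T : F →L[ℝ] G) {f : E → F} {x : E} (hf : DifferentiableAt ℝ f x) (v : E) :
    fderiv ℝ (fun y => T (f y)) x v = T (fderiv ℝ f x v) := by
  rw [show (fun y => T (f y)) = T ∘ f from rfl, fderiv_comp x T.differentiableAt hf, T.fderiv]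
  rfl

lemma clm_decomp (T : ((Fin m → ℝ) × (Fin m → Fin n → ℝ)) →L[ℝ] ℝ)
    (a : Fin m → ℝ) (b : Fin m → Fin n → ℝ) :
    T (a, b) = (∑ k, a k * T (Pi.single k 1, 0)) +
      ∑ k, ∑ i, b k i * T (0, Pi.single k (Pi.single i 1)) := by
  have hsplit : T (a, b) = T (a, 0) + T (0, b) := by
    rw [show ((a, b) : (Fin m → ℝ) × (Fin m → Fin n → ℝ)) = (a, 0) + (0, b) by simp, map_add]
  have h1 : T (a, 0) = ∑ k, a k * T (Pi.single k 1, 0) := by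
    have e1 : T (a, 0) = (T.comp (ContinuousLinearMap.inl ℝ _ _)) a := by simp
    rw [e1]
    conv_lhs => rw [vec_decomp a]
    simp [smul_eq_mul]
  have h2 : T (0, b) = ∑ k, ∑ i, b k i * T (0, Pi.single k (Pi.single i 1)) := by
    have e2 : T (0, b) = (T.comp (ContinuousLinearMap.inr ℝ _ _)) b := by simp
    rw [e2]
    conv_lhs => rw [mat_decomp b]
    simp [smul_eq_mul]
  rw [hsplit, h1, h2]

end helpers

/-- The energy-momentum tensor from Noether's first theorem and translation invariance:
for a first-order Lagrangian `L(y, q)` not depending on the domain variable `x`,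
and a smooth solution `u` of the Euler–Lagrange equations on an open set `Ω`, the tensor
`S_{ij} = Σ_k L_{q^k_i}(u, Du) ∂u^k/∂x^j − δ_{ij} L(u, Du)` is divergence free in its
first index. -/
theorem energy_momentum_tensor_div_free
    {n m : ℕ}
    (Ω : Set (Fin n → ℝ)) (hΩ : IsOpen Ω)
    (L : ((Fin m → ℝ) × (Fin m → Fin n → ℝ)) → ℝ)
    (hL : ContDiff ℝ (⊤ : ℕ∞) L)
    (u : (Fin n → ℝ) → (Fin m → ℝ))
    (hu : ContDiffOn ℝ (⊤ : ℕ∞) u Ω)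
    -- the Jacobian matrix `Du(x)`, with entries `(Du x) k i = ∂u^k/∂x^i`
    (Du : (Fin n → ℝ) → (Fin m → Fin n → ℝ))
    (hDu : ∀ x ∈ Ω, ∀ k i, Du x k i = fderiv ℝ u x (Pi.single i 1) k)
    -- Euler–Lagrange equations on Ω:
    -- L_{y^k}(u, Du) = Σ_i ∂/∂x^i [ L_{q^k_i}(u, Du) ]
    (hEL : ∀ x ∈ Ω, ∀ k : Fin m,
      fderiv ℝ L (u x, Du x) (Pi.single k 1, 0) =
        ∑ i : Fin n, pderiv' i
          (fun x' => fderiv ℝ L (u x', Du x') (0, Pi.single k (Pi.single i 1))) x)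
    -- the energy-momentum tensor S
    (S : (Fin n → ℝ) → (Fin n → Fin n → ℝ))
    (hS : ∀ x ∈ Ω, ∀ i j : Fin n, S x i j =
      (∑ k : Fin m,
        fderiv ℝ L (u x, Du x) (0, Pi.single k (Pi.single i 1)) * Du x k j) -
        (if i = j then 1 else 0) * L (u x, Du x)) :
    ∀ x ∈ Ω, ∀ j : Fin n, ∑ i : Fin n, pderiv' i (fun x' => S x' i j) x = 0 := by
  intro x hx j
  have hnx : Ω ∈ nhds x := hΩ.mem_nhds hx
  -- smoothness of `u` and its derivative
  have hUon : ContDiffOn ℝ (⊤ : ℕ∞) (fun y => fderiv ℝ u y) Ω :=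
    hu.fderiv_of_isOpen hΩ (by simp)
  have hud : DifferentiableAt ℝ u x :=
    (hu.contDiffAt hnx).differentiableAt (by norm_cast)
  have hUd : DifferentiableAt ℝ (fun y => fderiv ℝ u y) x :=
    (hUon.contDiffAt hnx).differentiableAt (by norm_cast)
  -- components of the Jacobian are differentiable, and their derivatives
  have hTd : ∀ (k : Fin m) (i : Fin n),
      DifferentiableAt ℝ (fun x' => fderiv ℝ u x' (Pi.single i 1) k) x := fun k i =>
    differentiableAt_pi.1 (hUd.clm_apply (differentiableAt_const (Pi.single i 1))) k
  have hD1 : ∀ (k : Fin m) (i : Fin n) (v : Fin n → ℝ),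
      fderiv ℝ (fun x' => fderiv ℝ u x' (Pi.single i 1) k) x v
        = fderiv ℝ (fun y => fderiv ℝ u y) x v (Pi.single i 1) k :=
    fun k i v => clm_comp_fderiv_apply ((ContinuousLinearMap.proj k).comp
      (ContinuousLinearMap.apply ℝ (Fin m → ℝ) (Pi.single i 1))) hUd v
  -- symmetry of second derivatives
  have hsym : ∀ v w, fderiv ℝ (fderiv ℝ u) x v w = fderiv ℝ (fderiv ℝ u) x w v :=
    (hu.contDiffAt hnx).isSymmSndFDerivAt (by simp; exact le_trans (le_of_eq (by norm_cast)) (WithTop.coe_le_coe.2 (le_top : (2:ℕ∞) ≤ ⊤)))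
  -- the Jacobian as a matrix-valued map, and the pair map g
  have hDk : ∀ k : Fin m,
      DifferentiableAt ℝ (fun x' => (fun i => fderiv ℝ u x' (Pi.single i 1) k)) x :=
    fun k => differentiableAt_pi.2 fun i => hTd k i
  have hDd : DifferentiableAt ℝ (fun x' => (fun k i => fderiv ℝ u x' (Pi.single i 1) k)) x :=
    differentiableAt_pi.2 hDk
  have hgd : DifferentiableAt ℝ
      (fun x' => ((u x', fun k i => fderiv ℝ u x' (Pi.single i 1) k) :
        (Fin m → ℝ) × (Fin m → Fin n → ℝ))) x := hud.prodMk hDd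
  -- derivative of g
  have hfD : ∀ v : Fin n → ℝ,
      fderiv ℝ (fun x' => (fun k i => fderiv ℝ u x' (Pi.single i 1) k)) x v
        = fun k i => fderiv ℝ (fderiv ℝ u) x v (Pi.single i 1) k := by
    intro v
    rw [fderiv_pi hDk]
    funext k
    simp only [ContinuousLinearMap.pi_apply]
    rw [fderiv_pi (fun i => hTd k i)]
    funext i
    simp only [ContinuousLinearMap.pi_apply]
    exact hD1 k i v
  have hfg : ∀ v : Fin n → ℝ,
      fderiv ℝ (fun x' => ((u x', fun k i => fderiv ℝ u x' (Pi.single i 1) k) :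
        (Fin m → ℝ) × (Fin m → Fin n → ℝ))) x v
        = (fderiv ℝ u x v, fun k i => fderiv ℝ (fderiv ℝ u) x v (Pi.single i 1) k) := by
    intro v
    rw [DifferentiableAt.fderiv_prodMk hud hDd]
    simp only [ContinuousLinearMap.prod_apply]
    rw [hfD v]
  -- smoothness of g at x
  have hgat : ContDiffAt ℝ (⊤ : ℕ∞)
      (fun x' => ((u x', fun k i => fderiv ℝ u x' (Pi.single i 1) k) :
        (Fin m → ℝ) × (Fin m → Fin n → ℝ))) x := by
    apply ContDiffOn.contDiffAt _ hnx
    apply ContDiffOn.prodMk hu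
    rw [contDiffOn_pi]; intro k; rw [contDiffOn_pi]; intro i
    exact ((ContinuousLinearMap.proj k).comp
      (ContinuousLinearMap.apply ℝ (Fin m → ℝ) (Pi.single i 1))).contDiff.comp_contDiffOn hUon
  -- differentiability of the composed maps
  have hA : ∀ w : (Fin m → ℝ) × (Fin m → Fin n → ℝ), DifferentiableAt ℝ
      (fun x' => fderiv ℝ L ((u x', fun k i => fderiv ℝ u x' (Pi.single i 1) k)) w) x := by
    intro w
    have h1 : ContDiffAt ℝ (⊤ : ℕ∞)
        (fun x' => fderiv ℝ L ((u x', fun k i => fderiv ℝ u x' (Pi.single i 1) k))) x :=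
      (hL.fderiv_right (by simp)).contDiffAt.comp x hgat
    exact (h1.differentiableAt (by norm_cast)).clm_apply (differentiableAt_const w)
  have hLgd : DifferentiableAt ℝ
      (fun x' => L ((u x', fun k i => fderiv ℝ u x' (Pi.single i 1) k))) x :=
    (hL.contDiffAt.comp x hgat).differentiableAt (by norm_cast)
  -- identification of (u, Du) with g near x
  have hgDu : ∀ᶠ y in nhds x, ((u y, Du y) : (Fin m → ℝ) × (Fin m → Fin n → ℝ))
      = (u y, fun k i => fderiv ℝ u y (Pi.single i 1) k) := by
    filter_upwards [hnx] with y hy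
    exact congrArg (Prod.mk (u y)) (funext fun k => funext fun i => hDu y hy k i)
  have h0 : ((u x, Du x) : (Fin m → ℝ) × (Fin m → Fin n → ℝ))
      = (u x, fun k i => fderiv ℝ u x (Pi.single i 1) k) :=
    congrArg (Prod.mk (u x)) (funext fun k => funext fun i => hDu x hx k i)
  -- Euler–Lagrange transported to g
  have hEL' : ∀ k : Fin m,
      fderiv ℝ L ((u x, fun k i => fderiv ℝ u x (Pi.single i 1) k)) (Pi.single k 1, 0) =
      ∑ i : Fin n, fderiv ℝ
        (fun x' => fderiv ℝ L ((u x', fun k' i' => fderiv ℝ u x' (Pi.single i' 1) k'))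
          (0, Pi.single k (Pi.single i 1))) x (Pi.single i 1) := by
    intro k
    rw [← h0, hEL x hx k]
    refine Finset.sum_congr rfl fun i _ => ?_
    unfold pderiv'
    congr 1
    apply Filter.EventuallyEq.fderiv_eq
    filter_upwards [hgDu] with y hy
    rw [hy]
  -- product rule for each term of the divergence
  have hstep : ∀ i : Fin n, pderiv' i (fun x' => S x' i j) x =
      (∑ k : Fin m,
        (fderiv ℝ L ((u x, fun k' i' => fderiv ℝ u x (Pi.single i' 1) k'))
            (0, Pi.single k (Pi.single i 1))
            * fderiv ℝ (fderiv ℝ u) x (Pi.single i 1) (Pi.single j 1) k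
          + fderiv ℝ u x (Pi.single j 1) k *
            fderiv ℝ (fun x' => fderiv ℝ L ((u x', fun k' i' => fderiv ℝ u x' (Pi.single i' 1) k'))
              (0, Pi.single k (Pi.single i 1))) x (Pi.single i 1)))
      - (if i = j then 1 else 0) * fderiv ℝ
          (fun x' => L ((u x', fun k' i' => fderiv ℝ u x' (Pi.single i' 1) k'))) x
          (Pi.single i 1) := by
    intro i
    unfold pderiv'
    have hev : (fun x' => S x' i j) =ᶠ[nhds x]
        (fun x' => (∑ k : Fin m,
            fderiv ℝ L ((u x', fun k' i' => fderiv ℝ u x' (Pi.single i' 1) k'))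
              (0, Pi.single k (Pi.single i 1)) * fderiv ℝ u x' (Pi.single j 1) k)
          - (if i = j then 1 else 0)
            * L ((u x', fun k' i' => fderiv ℝ u x' (Pi.single i' 1) k'))) := by
      filter_upwards [hnx, hgDu] with y hy h2
      have h3 : Du y = fun k' i' => fderiv ℝ u y (Pi.single i' 1) k' :=
        funext fun k => funext fun i' => hDu y hy k i'
      rw [hS y hy i j, h2, h3]
    rw [hev.fderiv_eq]
    have hterm : ∀ k : Fin m, DifferentiableAt ℝ
        (fun x' => fderiv ℝ L ((u x', fun k' i' => fderiv ℝ u x' (Pi.single i' 1) k'))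
          (0, Pi.single k (Pi.single i 1)) * fderiv ℝ u x' (Pi.single j 1) k) x :=
      fun k => (hA _).mul (hTd k j)
    rw [fderiv_fun_sub (DifferentiableAt.fun_sum fun k _ => hterm k) (hLgd.const_mul _)]
    simp only [ContinuousLinearMap.sub_apply]
    congr 1
    · rw [fderiv_fun_sum (fun k _ => hterm k)]
      simp only [ContinuousLinearMap.sum_apply]
      refine Finset.sum_congr rfl fun k _ => ?_
      rw [fderiv_fun_mul (hA _) (hTd k j)]
      simp only [ContinuousLinearMap.add_apply, ContinuousLinearMap.smul_apply, smul_eq_mul]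
      rw [hD1 k j (Pi.single i 1)]
    · rw [fderiv_const_mul hLgd]
      rcases eq_or_ne i j with h | h <;> simp [h]
  -- the derivative of L ∘ g in direction e_j
  have hLj : fderiv ℝ
      (fun x' => L ((u x', fun k' i' => fderiv ℝ u x' (Pi.single i' 1) k'))) x (Pi.single j 1)
      = (∑ k : Fin m, fderiv ℝ u x (Pi.single j 1) k
          * fderiv ℝ L ((u x, fun k' i' => fderiv ℝ u x (Pi.single i' 1) k')) (Pi.single k 1, 0))
        + ∑ k : Fin m, ∑ i : Fin n,
            fderiv ℝ (fderiv ℝ u) x (Pi.single j 1) (Pi.single i 1) k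
              * fderiv ℝ L ((u x, fun k' i' => fderiv ℝ u x (Pi.single i' 1) k'))
                  (0, Pi.single k (Pi.single i 1)) := by
    have hcomp : fderiv ℝ
        (fun x' => L ((u x', fun k' i' => fderiv ℝ u x' (Pi.single i' 1) k'))) x
        = (fderiv ℝ L ((u x, fun k' i' => fderiv ℝ u x (Pi.single i' 1) k'))).comp
            (fderiv ℝ (fun x' => ((u x', fun k' i' => fderiv ℝ u x' (Pi.single i' 1) k') :
              (Fin m → ℝ) × (Fin m → Fin n → ℝ))) x) :=
      fderiv_comp x (hL.differentiable (by norm_cast) _) hgd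
    rw [hcomp]
    simp only [ContinuousLinearMap.comp_apply]
    rw [hfg (Pi.single j 1), clm_decomp]
  -- assemble
  rw [Finset.sum_congr rfl fun i _ => hstep i]
  rw [Finset.sum_sub_distrib]
  have hdelta : (∑ i : Fin n, (if i = j then 1 else 0) * fderiv ℝ
      (fun x' => L ((u x', fun k' i' => fderiv ℝ u x' (Pi.single i' 1) k'))) x (Pi.single i 1))
      = fderiv ℝ
        (fun x' => L ((u x', fun k' i' => fderiv ℝ u x' (Pi.single i' 1) k'))) x
        (Pi.single j 1) := by
    simp [ite_mul]
  rw [hdelta, hLj, sub_eq_zero]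
  rw [Finset.sum_comm]
  rw [show (∑ k : Fin m, ∑ i : Fin n,
      (fderiv ℝ L ((u x, fun k' i' => fderiv ℝ u x (Pi.single i' 1) k'))
          (0, Pi.single k (Pi.single i 1))
          * fderiv ℝ (fderiv ℝ u) x (Pi.single i 1) (Pi.single j 1) k
        + fderiv ℝ u x (Pi.single j 1) k *
          fderiv ℝ (fun x' => fderiv ℝ L ((u x', fun k' i' => fderiv ℝ u x' (Pi.single i' 1) k'))
            (0, Pi.single k (Pi.single i 1))) x (Pi.single i 1)))
    = ∑ k : Fin m, ((∑ i : Fin n,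
        fderiv ℝ (fderiv ℝ u) x (Pi.single j 1) (Pi.single i 1) k
          * fderiv ℝ L ((u x, fun k' i' => fderiv ℝ u x (Pi.single i' 1) k'))
              (0, Pi.single k (Pi.single i 1)))
      + fderiv ℝ u x (Pi.single j 1) k
          * fderiv ℝ L ((u x, fun k' i' => fderiv ℝ u x (Pi.single i' 1) k')) (Pi.single k 1, 0))
    from Finset.sum_congr rfl fun k _ => by
      rw [Finset.sum_add_distrib, ← Finset.mul_sum, ← hEL' k]
      congr 1
      refine Finset.sum_congr rfl fun i _ => ?_
      rw [show fderiv ℝ (fderiv ℝ u) x (Pi.single i 1) (Pi.single j 1) k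
          = fderiv ℝ (fderiv ℝ u) x (Pi.single j 1) (Pi.single i 1) k from
        congrFun (hsym (Pi.single i 1) (Pi.single j 1)) k]
      ring]
  rw [Finset.sum_add_distrib]
  ring
end

section
/- Let Ω ⊆ ℝⁿ be open, let p > 1 be real, and let u : Ω → ℝᵐ be smooth with Du(x) ≠ 0 for all x ∈ Ω, satisfying the p-harmonic system: for each k, Σ_i ∂/∂x^i ( |Du|^{p−2} ∂u^k/∂x^i ) = 0 on Ω, where |Du|² = Σ_{i,k} (∂u^k/∂x^i)². Then the tensor S_{ij} = |Du|^{p−2} Σ_k (∂u^k/∂x^i)(∂u^k/∂x^j) − (1/p) δ_{ij} |Du|^p satisfies Σ_i ∂S_{ij}/∂x^i = 0 on Ω for each j. -/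
theorem aux_sum_pharm {n m : ℕ} (p A : ℝ) (hp : p ≠ 0) (j : Fin n)
    (c : Fin n → Fin m → ℝ) (W : Fin n → Fin n → Fin m → ℝ) (P D : Fin n → ℝ)
    (hsym : ∀ i i' k, W i i' k = W i' i k)
    (hph : ∀ k, ∑ i, (A * W i i k + c i k * P i) = 0)
    (hD : ∀ i', D i' = ∑ i, ∑ k, 2 * c i k * W i' i k) :
    ∑ i, (A * (∑ k, (c i k * W i j k + c j k * W i i k)) + (∑ k, c i k * c j k) * P i
      - (if i = j then 1 else 0) * (1 / p * (p / 2 * A * D i))) = 0 := by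
  rw [Finset.sum_sub_distrib]
  have h3 : ∑ i, (if i = j then (1:ℝ) else 0) * (1 / p * (p / 2 * A * D i))
      = ∑ i, ∑ k, A * (c i k * W j i k) := by
    rw [Finset.sum_eq_single j (fun i _ hij => by simp [hij]) (by simp)]
    rw [if_pos rfl, one_mul, hD j]
    simp only [Finset.mul_sum]
    refine Finset.sum_congr rfl fun i _ => Finset.sum_congr rfl fun k _ => ?_
    field_simp
  rw [h3]
  have h1 : ∀ i, A * (∑ k, (c i k * W i j k + c j k * W i i k)) + (∑ k, c i k * c j k) * P i
      = (∑ k, A * (c i k * W j i k)) + ∑ k, c j k * (A * W i i k + c i k * P i) := by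
    intro i
    rw [Finset.mul_sum, Finset.sum_mul, ← Finset.sum_add_distrib, ← Finset.sum_add_distrib]
    refine Finset.sum_congr rfl fun k _ => ?_
    rw [hsym i j k]
    ring
  rw [Finset.sum_congr rfl fun i _ => h1 i, Finset.sum_add_distrib]
  have h2 : ∑ i, ∑ k, c j k * (A * W i i k + c i k * P i) = 0 := by
    rw [Finset.sum_comm]
    refine Finset.sum_eq_zero fun k _ => ?_
    rw [← Finset.mul_sum, hph k, mul_zero]
  rw [h2]
  ring

/-- The energy-momentum tensor of the `p`-energy functional: if `u` is a smooth solution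
of the `p`-harmonic system on an open set `Ω ⊆ ℝⁿ` with nowhere-vanishing differential,
then `S_{ij} = |Du|^{p−2} Σ_k (∂u^k/∂x^i)(∂u^k/∂x^j) − (1/p) δ_{ij} |Du|^p` is
divergence free. -/
theorem p_harmonic_energy_momentum_div_free
    {n m : ℕ}
    (Ω : Set (Fin n → ℝ)) (hΩ : IsOpen Ω)
    (p : ℝ) (hp : 1 < p)
    (u : (Fin n → ℝ) → (Fin m → ℝ))
    (hu : ContDiffOn ℝ (⊤ : ℕ∞) u Ω)
    -- `Du(x) ≠ 0` on Ω
    (hDu : ∀ x ∈ Ω, fderiv ℝ u x ≠ 0)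
    -- the pointwise norm `|Du|`, with `|Du|² = Σ_{i,k} (∂u^k/∂x^i)²`
    (nDu : (Fin n → ℝ) → ℝ)
    (hnDu : ∀ x ∈ Ω, nDu x =
      Real.sqrt (∑ i : Fin n, ∑ k : Fin m, (fderiv ℝ u x (Pi.single i 1) k) ^ 2))
    -- the p-harmonic system: Σ_i ∂/∂x^i ( |Du|^{p−2} ∂u^k/∂x^i ) = 0 on Ω
    (hpharm : ∀ x ∈ Ω, ∀ k : Fin m,
      ∑ i : Fin n, pderiv' i
        (fun x' => nDu x' ^ (p - 2) * fderiv ℝ u x' (Pi.single i 1) k) x = 0)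
    -- the energy-momentum tensor S
    (S : (Fin n → ℝ) → (Fin n → Fin n → ℝ))
    (hS : ∀ x ∈ Ω, ∀ i j : Fin n, S x i j =
      nDu x ^ (p - 2) *
        (∑ k : Fin m, fderiv ℝ u x (Pi.single i 1) k * fderiv ℝ u x (Pi.single j 1) k) -
        (1 / p) * (if i = j then 1 else 0) * nDu x ^ p) :
    ∀ x ∈ Ω, ∀ j : Fin n, ∑ i : Fin n, pderiv' i (fun x' => S x' i j) x = 0 := by
  intro x hx j
  have hΩx : Ω ∈ nhds x := hΩ.mem_nhds hx
  have h2le : (2 : WithTop ℕ∞) ≤ ((⊤ : ℕ∞) : WithTop ℕ∞) := by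
    norm_cast
  have h1le : (1 : WithTop ℕ∞) ≤ ((⊤ : ℕ∞) : WithTop ℕ∞) := by exact_mod_cast le_top
  have htop : ((⊤ : ℕ∞) : WithTop ℕ∞) + 1 ≤ ((⊤ : ℕ∞) : WithTop ℕ∞) := by
    exact_mod_cast le_top
  have hp0 : p ≠ 0 := (lt_trans zero_lt_one hp).ne'
  -- smoothness of the derivative map
  have hFsm : ∀ y ∈ Ω, ContDiffAt ℝ (⊤ : ℕ∞) (fderiv ℝ u) y := fun y hy =>
    (hu.contDiffAt (hΩ.mem_nhds hy)).fderiv_right htop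
  -- differentiability of the partials
  have hUd : ∀ (i : Fin n) (k : Fin m), ∀ y ∈ Ω,
      DifferentiableAt ℝ (fun y => fderiv ℝ u y (Pi.single i 1) k) y := fun i k y hy =>
    (contDiffAt_pi.1 ((hFsm y hy).clm_apply contDiffAt_const) k).differentiableAt (by simp)
  -- positivity of |Du|²
  have hgpos : ∀ y ∈ Ω, 0 < ∑ i, ∑ k, fderiv ℝ u y (Pi.single i 1) k ^ 2 := by
    intro y hy
    have hnn : (0:ℝ) ≤ ∑ i, ∑ k, fderiv ℝ u y (Pi.single i 1) k ^ 2 :=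
      Finset.sum_nonneg fun i _ => Finset.sum_nonneg fun k _ => sq_nonneg _
    rcases hnn.lt_or_eq with h | h
    · exact h
    · exfalso
      apply hDu y hy
      have hz : ∀ i k, fderiv ℝ u y (Pi.single i 1) k = 0 := by
        intro i k
        have h2 := (Finset.sum_eq_zero_iff_of_nonneg
          (fun i _ => Finset.sum_nonneg fun k _ => sq_nonneg
            (fderiv ℝ u y (Pi.single i 1) k))).1 h.symm i (Finset.mem_univ i)
        have h3 := (Finset.sum_eq_zero_iff_of_nonneg (fun k _ => sq_nonneg _)).1 h2 k
          (Finset.mem_univ k)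
        exact pow_eq_zero_iff (two_ne_zero) |>.1 h3
      have hb : ∀ i : Fin n, fderiv ℝ u y (Pi.single i 1) = 0 := fun i => funext fun k => hz i k
      ext v
      have hv : v = ∑ i, v i • (Pi.single i 1 : Fin n → ℝ) := by
        conv_lhs => rw [← Finset.univ_sum_single v]
        refine Finset.sum_congr rfl fun i _ => ?_
        rw [← Pi.single_smul, smul_eq_mul, mul_one]
      rw [hv, map_sum]
      simp [map_smul, hb]
  -- derivative of g at x
  have hgD : HasFDerivAt (fun y => ∑ i, ∑ k, fderiv ℝ u y (Pi.single i 1) k ^ 2)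
      (∑ i, ∑ k, (2 * fderiv ℝ u x (Pi.single i 1) k) •
        fderiv ℝ (fun y => fderiv ℝ u y (Pi.single i 1) k) x) x := by
    apply HasFDerivAt.fun_sum; intro i _
    apply HasFDerivAt.fun_sum; intro k _
    have h := (hUd i k x hx).hasFDerivAt
    have h2 := h.mul h
    have h3 : (fun y => fderiv ℝ u y (Pi.single i 1) k ^ 2)
        = fun y => fderiv ℝ u y (Pi.single i 1) k * fderiv ℝ u y (Pi.single i 1) k := by
      funext y; ring
    rw [h3, two_mul, add_smul]
    exact h2
  have hgne : (∑ i, ∑ k, fderiv ℝ u x (Pi.single i 1) k ^ 2) ≠ 0 := (hgpos x hx).ne'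
  have haD := hgD.rpow_const (p := p / 2 - 1) (Or.inl hgne)
  have heD := hgD.rpow_const (p := p / 2) (Or.inl hgne)
  -- symmetry of second derivatives
  have hsymm : IsSymmSndFDerivAt ℝ u x := (hu.contDiffAt hΩx).isSymmSndFDerivAt (by simpa using h2le)
  have hFd : DifferentiableAt ℝ (fderiv ℝ u) x := (hFsm x hx).differentiableAt (by simp)
  have hUfd : ∀ (i : Fin n) (k : Fin m) (v : Fin n → ℝ),
      fderiv ℝ (fun y => fderiv ℝ u y (Pi.single i 1) k) x v
        = fderiv ℝ (fderiv ℝ u) x v (Pi.single i 1) k := by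
    intro i k v
    have hw : DifferentiableAt ℝ (fun y => fderiv ℝ u y (Pi.single i 1)) x :=
      hFd.clm_apply (differentiableAt_const _)
    have h1 : fderiv ℝ (fun y => fderiv ℝ u y (Pi.single i 1)) x
        = (fderiv ℝ (fderiv ℝ u) x).flip (Pi.single i 1) := by
      rw [fderiv_clm_apply hFd (differentiableAt_const _)]
      simp
    have h2 : fderiv ℝ (fun y =>
        (ContinuousLinearMap.proj (R := ℝ) (φ := fun _ : Fin m => ℝ) k)
          ((fun y => fderiv ℝ u y (Pi.single i 1)) y)) x
        = (ContinuousLinearMap.proj (R := ℝ) (φ := fun _ : Fin m => ℝ) k).comp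
            (fderiv ℝ (fun y => fderiv ℝ u y (Pi.single i 1)) x) := by
      rw [fderiv_clm_apply (differentiableAt_const _) hw]
      ext w
      simp
    calc fderiv ℝ (fun y => fderiv ℝ u y (Pi.single i 1) k) x v
        = ((ContinuousLinearMap.proj (R := ℝ) (φ := fun _ : Fin m => ℝ) k).comp
            (fderiv ℝ (fun y => fderiv ℝ u y (Pi.single i 1)) x)) v := by rw [← h2]; rfl
      _ = fderiv ℝ (fderiv ℝ u) x v (Pi.single i 1) k := by rw [h1]; rfl
  have hsymW : ∀ (i i' : Fin n) (k : Fin m),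
      fderiv ℝ (fun y => fderiv ℝ u y (Pi.single i' 1) k) x (Pi.single i 1)
        = fderiv ℝ (fun y => fderiv ℝ u y (Pi.single i 1) k) x (Pi.single i' 1) := by
    intro i i' k
    rw [hUfd i' k, hUfd i k]
    exact congrFun (hsymm.eq _ _) k
  -- rewriting of the norm powers
  have hrw1 : ∀ y ∈ Ω, nDu y ^ (p - 2)
      = (∑ i, ∑ k, fderiv ℝ u y (Pi.single i 1) k ^ 2) ^ (p / 2 - 1) := by
    intro y hy
    rw [hnDu y hy, Real.sqrt_eq_rpow, ← Real.rpow_mul (hgpos y hy).le]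
    congr 1
    ring
  have hrw2 : ∀ y ∈ Ω, nDu y ^ p
      = (∑ i, ∑ k, fderiv ℝ u y (Pi.single i 1) k ^ 2) ^ (p / 2) := by
    intro y hy
    rw [hnDu y hy, Real.sqrt_eq_rpow, ← Real.rpow_mul (hgpos y hy).le]
    congr 1
    ring
  -- derivatives of the tensor entries
  have hTD : ∀ i : Fin n, HasFDerivAt
      (fun y => ∑ k'', fderiv ℝ u y (Pi.single i 1) k'' * fderiv ℝ u y (Pi.single j 1) k'') (∑ k'', (fderiv ℝ u x (Pi.single i 1) k'' • fderiv ℝ (fun y => fderiv ℝ u y (Pi.single j 1) k'') x + fderiv ℝ u x (Pi.single j 1) k'' • fderiv ℝ (fun y => fderiv ℝ u y (Pi.single i 1) k'') x)) x := fun i =>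
    HasFDerivAt.fun_sum fun k _ => (hUd i k x hx).hasFDerivAt.mul (hUd j k x hx).hasFDerivAt
  have hS'D : ∀ i : Fin n, HasFDerivAt (fun y => (∑ i'', ∑ k'', fderiv ℝ u y (Pi.single i'' 1) k'' ^ 2) ^ (p / 2 - 1) * (∑ k'', fderiv ℝ u y (Pi.single i 1) k'' * fderiv ℝ u y (Pi.single j 1) k'') - 1 / p * (if i = j then 1 else 0) * (∑ i'', ∑ k'', fderiv ℝ u y (Pi.single i'' 1) k'' ^ 2) ^ (p / 2)) (((∑ i'', ∑ k'', fderiv ℝ u x (Pi.single i'' 1) k'' ^ 2) ^ (p / 2 - 1) • (∑ k'', (fderiv ℝ u x (Pi.single i 1) k'' • fderiv ℝ (fun y => fderiv ℝ u y (Pi.single j 1) k'') x + fderiv ℝ u x (Pi.single j 1) k'' • fderiv ℝ (fun y => fderiv ℝ u y (Pi.single i 1) k'') x)) + (∑ k'', fderiv ℝ u x (Pi.single i 1) k'' * fderiv ℝ u x (Pi.single j 1) k'') • (((p / 2 - 1) * (∑ i'', ∑ k'', fderiv ℝ u x (Pi.single i'' 1) k'' ^ 2) ^ (p / 2 - 1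 - 1)) • (∑ i'', ∑ k'', (2 * fderiv ℝ u x (Pi.single i'' 1) k'') • fderiv ℝ (fun y => fderiv ℝ u y (Pi.single i'' 1) k'') x))) - (1 / p * (if i = j then 1 else 0)) • ((p / 2 * (∑ i'', ∑ k'', fderiv ℝ u x (Pi.single i'' 1) k'' ^ 2) ^ (p / 2 - 1)) • (∑ i'', ∑ k'', (2 * fderiv ℝ u x (Pi.single i'' 1) k'') • fderiv ℝ (fun y => fderiv ℝ u y (Pi.single i'' 1) k'') x))) x := fun i =>
    (haD.mul (hTD i)).sub (heD.const_mul (1 / p * (if i = j then 1 else 0)))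
  have hSev : ∀ i : Fin n, (fun y => S y i j) =ᶠ[nhds x] (fun y => (∑ i'', ∑ k'', fderiv ℝ u y (Pi.single i'' 1) k'' ^ 2) ^ (p / 2 - 1) * (∑ k'', fderiv ℝ u y (Pi.single i 1) k'' * fderiv ℝ u y (Pi.single j 1) k'') - 1 / p * (if i = j then 1 else 0) * (∑ i'', ∑ k'', fderiv ℝ u y (Pi.single i'' 1) k'' ^ 2) ^ (p / 2)) := fun i =>
    Filter.eventuallyEq_of_mem hΩx fun y hy => by
      rw [hS y hy i j, hrw1 y hy, hrw2 y hy]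
  -- scalar form of the p-harmonic system
  have hph2 : ∀ k : Fin m, ∑ i, ((∑ i'', ∑ k'', fderiv ℝ u x (Pi.single i'' 1) k'' ^ 2) ^ (p / 2 - 1) * fderiv ℝ (fun y => fderiv ℝ u y (Pi.single i 1) k) x (Pi.single i 1) + fderiv ℝ u x (Pi.single i 1) k * ((p / 2 - 1) * (∑ i'', ∑ k'', fderiv ℝ u x (Pi.single i'' 1) k'' ^ 2) ^ (p / 2 - 1 - 1) * (∑ i'', ∑ k'', 2 * fderiv ℝ u x (Pi.single i'' 1) k'' * fderiv ℝ (fun y => fderiv ℝ u y (Pi.single i'' 1) k'') x (Pi.single i 1)))) = 0 := by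
    intro k
    have h1 : ∀ i : Fin n, pderiv' i
        (fun x' => nDu x' ^ (p - 2) * fderiv ℝ u x' (Pi.single i 1) k) x
        = (∑ i'', ∑ k'', fderiv ℝ u x (Pi.single i'' 1) k'' ^ 2) ^ (p / 2 - 1) * fderiv ℝ (fun y => fderiv ℝ u y (Pi.single i 1) k) x (Pi.single i 1) + fderiv ℝ u x (Pi.single i 1) k * ((p / 2 - 1) * (∑ i'', ∑ k'', fderiv ℝ u x (Pi.single i'' 1) k'' ^ 2) ^ (p / 2 - 1 - 1) * (∑ i'', ∑ k'', 2 * fderiv ℝ u x (Pi.single i'' 1) k'' * fderiv ℝ (fun y => fderiv ℝ u y (Pi.single i'' 1) k'') x (Pi.single i 1))) := by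
      intro i
      have hev : (fun x' => nDu x' ^ (p - 2) * fderiv ℝ u x' (Pi.single i 1) k)
          =ᶠ[nhds x] (fun y => (∑ i'', ∑ k'', fderiv ℝ u y (Pi.single i'' 1) k'' ^ 2) ^ (p / 2 - 1) * fderiv ℝ u y (Pi.single i 1) k) :=
        Filter.eventuallyEq_of_mem hΩx fun y hy => by rw [hrw1 y hy]
      have h5 : HasFDerivAt (fun y => (∑ i'', ∑ k'', fderiv ℝ u y (Pi.single i'' 1) k'' ^ 2) ^ (p / 2 - 1) * fderiv ℝ u y (Pi.single i 1) k)
          ((∑ i'', ∑ k'', fderiv ℝ u x (Pi.single i'' 1) k'' ^ 2) ^ (p / 2 - 1) • fderiv ℝ (fun y => fderiv ℝ u y (Pi.single i 1) k) x + fderiv ℝ u x (Pi.single i 1) k • (((p / 2 - 1) * (∑ i'', ∑ k'', fderiv ℝ u x (Pi.single i'' 1) k'' ^ 2) ^ (p / 2 - 1 - 1)) • (∑ i'', ∑ k'', (2 * fderiv ℝ u x (Pi.single i'' 1) k'') • fderiv ℝ (fun y => fderiv ℝ u y (Pi.single i'' 1) k'') x))) x :=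
        haD.mul (hUd i k x hx).hasFDerivAt
      simp only [pderiv']
      rw [hev.fderiv_eq, h5.fderiv]
      simp only [ContinuousLinearMap.add_apply, ContinuousLinearMap.smul_apply,
        ContinuousLinearMap.sum_apply, smul_eq_mul]
    exact (Finset.sum_congr rfl fun i _ => (h1 i).symm).trans (hpharm x hx k)
  -- evaluation of the divergence terms
  have hval : ∀ i : Fin n, fderiv ℝ (fun x' => S x' i j) x (Pi.single i 1)
      = (∑ i'', ∑ k'', fderiv ℝ u x (Pi.single i'' 1) k'' ^ 2) ^ (p / 2 - 1) * (∑ k'', (fderiv ℝ u x (Pi.single i 1) k'' * fderiv ℝ (fun y => fderiv ℝ u y (Pi.single j 1) k'') x (Pi.single i 1) + fderiv ℝ u x (Pi.single j 1) k'' * fderiv ℝ (fun y => fderiv ℝ u y (Pi.single i 1) k'') x (Pi.single i 1))) + (∑ k'', fderiv ℝ u x (Pi.single i 1) k'' * fderiv ℝ u x (Pi.single j 1) k'') * ((p / 2 - 1) * (∑ i'', ∑ k'', fderiv ℝ u x (Pi.single i'' 1) k'' ^ 2) ^ (p / 2 - 1 - 1) * (∑ i'', ∑ k'', 2 * fderiv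 ℝ u x (Pi.single i'' 1) k'' * fderiv ℝ (fun y => fderiv ℝ u y (Pi.single i'' 1) k'') x (Pi.single i 1))) - (if i = j then 1 else 0) * (1 / p * (p / 2 * (∑ i'', ∑ k'', fderiv ℝ u x (Pi.single i'' 1) k'' ^ 2) ^ (p / 2 - 1) * (∑ i'', ∑ k'', 2 * fderiv ℝ u x (Pi.single i'' 1) k'' * fderiv ℝ (fun y => fderiv ℝ u y (Pi.single i'' 1) k'') x (Pi.single i 1)))) := by
    intro i
    rw [(hSev i).fderiv_eq, (hS'D i).fderiv]
    simp only [ContinuousLinearMap.sub_apply, ContinuousLinearMap.add_apply,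
      ContinuousLinearMap.smul_apply, ContinuousLinearMap.sum_apply, smul_eq_mul]
    ring
  simp only [pderiv']
  refine (Finset.sum_congr rfl fun i _ => hval i).trans ?_
  exact aux_sum_pharm p ((∑ i'', ∑ k'', fderiv ℝ u x (Pi.single i'' 1) k'' ^ 2) ^ (p / 2 - 1)) hp0 j
    (fun i k => fderiv ℝ u x (Pi.single i 1) k)
    (fun a b k => fderiv ℝ (fun y => fderiv ℝ u y (Pi.single b 1) k) x (Pi.single a 1))
    (fun i => ((p / 2 - 1) * (∑ i'', ∑ k'', fderiv ℝ u x (Pi.single i'' 1) k'' ^ 2) ^ (p / 2 - 1 - 1) * (∑ i'', ∑ k'', 2 * fderiv ℝ u x (Pi.single i'' 1) k'' * fderiv ℝ (fun y => fderiv ℝ u y (Pi.single i'' 1) k'') x (Pi.single i 1))))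
    (fun i => (∑ i'', ∑ k'', 2 * fderiv ℝ u x (Pi.single i'' 1) k'' * fderiv ℝ (fun y => fderiv ℝ u y (Pi.single i'' 1) k'') x (Pi.single i 1)))
    hsymW hph2 (fun i' => rfl)
end
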